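/- Let α > 0, let f ∈ L¹[−π,π] with f ≥ 0, let b ∈ (−π,0) ∪ (0,π), let f_H be the polarization of f with respect to b, and let u_f and u_{f_H} be the solutions of the Robin problem with heat sources f and f_H respectively. Then for every p with 1 ≤ p ≤ ∞, the L^p norm of u_f on [−π,π] is at most the L^p norm of u_{f_H} on [−π,π]. -/

import Mathlib

open MeasureTheory Real Set
open scoped ENNReal

/-- The constant `c_α = α/(1+απ)`. -/
noncomputable def cA (α : ℝ) : ℝ := α / (1 + α * π)

/-- The Green's function of the Robin problem on `[-π, π]`. -/
noncomputable def robinGreen (α x y : ℝ) : ℝ :=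
  -(1/2) * cA α * x * y - (1/2) * |x - y| + 1 / (2 * cA α)

/-- The solution of the Robin problem with heat source `f`. -/
noncomputable def robinSol (α : ℝ) (f : ℝ → ℝ) (x : ℝ) : ℝ :=
  ∫ y in (-π)..π, robinGreen α x y * f y

/-- The polarization (towards zero) of `f : [-π,π] → ℝ` with respect to `b`. -/
noncomputable def polar (b : ℝ) (f : ℝ → ℝ) (x : ℝ) : ℝ :=
  if 0 < b then
    if x < 2 * b - π then f x
    else if x ≤ b then max (f x) (f (2 * b - x))
    else min (f x) (f (2 * b - x))
  else
    if x ≤ b then min (f x) (f (2 * b - x))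
    else if x ≤ 2 * b + π then max (f x) (f (2 * b - x))
    else f x

set_option linter.unusedSectionVars false
set_option linter.unusedVariables false
set_option linter.unusedTactic false

lemma cA_pos {α : ℝ} (hα : 0 < α) : 0 < cA α := by
  have := pi_pos
  apply div_pos hα; nlinarith

lemma cA_pi_lt_one {α : ℝ} (hα : 0 < α) : cA α * π < 1 := by
  have hπ := pi_pos
  rw [cA, div_mul_eq_mul_div, div_lt_one (by nlinarith)]
  nlinarith

lemma green_symm (α x y : ℝ) : robinGreen α x y = robinGreen α y x := by
  unfold robinGreen; rw [abs_sub_comm]; ring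

section kernel
variable {α b x y : ℝ}

-- K1
lemma green_K1 (hα : 0 < α) (hb : 0 < b) (hbπ : b < π) (hx : -π ≤ x) (hxb : x ≤ b)
    (hy : 2*b - π ≤ y) (hyb : y ≤ b) :
    robinGreen α x (2*b - y) ≤ robinGreen α x y := by
  have hc := cA_pos hα
  have hcπ := cA_pi_lt_one hα
  have hπ := pi_pos
  unfold robinGreen
  have hcx : 0 ≤ 1 + cA α * x := by nlinarith [mul_le_mul_of_nonneg_left hx hc.le]
  rcases le_total x y with h | h
  · rw [abs_of_nonpos (by linarith : x - (2*b - y) ≤ 0), abs_of_nonpos (by linarith : x - y ≤ 0)]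
    nlinarith [mul_nonneg hcx (by linarith : (0:ℝ) ≤ b - y)]
  · rcases le_total x (2*b - y) with h2 | h2
    · rw [abs_of_nonpos (by linarith : x - (2*b - y) ≤ 0), abs_of_nonneg (by linarith : 0 ≤ x - y)]
      rcases le_total 0 x with hx0 | hx0
      · nlinarith [mul_nonneg (mul_nonneg hc.le hx0) (by linarith : (0:ℝ) ≤ b - y)]
      · have hnx : 0 ≤ -x := by linarith
        have e1 : cA α * (-x) * (b - y) ≤ cA α * (-x) * (π - b) := by
          apply mul_le_mul_of_nonneg_left (by linarith) (mul_nonneg hc.le hnx)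
        have e2 : π * (cA α * (-x) * (π - b)) ≤ (-x) * (π - b) := by
          have := mul_le_of_le_one_left (mul_nonneg hnx (by linarith : (0:ℝ) ≤ π - b)) hcπ.le
          nlinarith [this]
        have e3 : (-x) * (π - b) ≤ π * (b - x) := by
          nlinarith [mul_nonneg hb.le (by linarith : (0:ℝ) ≤ π - x)]
        have e4 : cA α * (-x) * (π - b) ≤ b - x := by nlinarith [e2, e3]
        nlinarith [e1, e4]
    · have hyb' : y = b := by nlinarith
      have hxb' : x = b := by nlinarith
      rw [show x - (2*b - y) = 0 by rw [hyb', hxb']; ring,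
        show x - y = 0 by rw [hyb', hxb']; ring]
      simp only [abs_zero]
      rw [hyb', hxb']
      nlinarith

-- K3
lemma green_K3 (hα : 0 < α) (hb : 0 < b) (hx : x ≤ b) (hy : y ≤ b) :
    robinGreen α (2*b - x) (2*b - y) ≤ robinGreen α x y := by
  have hc := cA_pos hα
  unfold robinGreen
  have h2 : |2*b - x - (2*b - y)| = |x - y| := by
    rw [show 2*b - x - (2*b - y) = -(x-y) by ring, abs_neg]
  rw [h2]
  nlinarith [mul_nonneg (mul_nonneg hc.le hb.le) (by linarith : (0:ℝ) ≤ 2*b - x - y)]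

-- K4
lemma green_K4 (hα : 0 < α) (hb : 0 < b) (hx : x ≤ b) :
    robinGreen α (2*b - x) y + robinGreen α (2*b - x) (2*b - y) ≤
      robinGreen α x y + robinGreen α x (2*b - y) := by
  have hc := cA_pos hα
  unfold robinGreen
  have h1 : |x - (2*b - y)| = |2*b - x - y| := by
    rw [show x - (2*b-y) = -(2*b - x - y) by ring, abs_neg]
  have h2 : |2*b - x - (2*b - y)| = |x - y| := by
    rw [show 2*b - x - (2*b - y) = -(x-y) by ring, abs_neg]
  rw [h1, h2]
  nlinarith [mul_nonneg (mul_nonneg hc.le hb.le) (by linarith : (0:ℝ) ≤ b - x)]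

lemma green_nonneg (hα : 0 < α) (hx : x ∈ Icc (-π) π) (hy : y ∈ Icc (-π) π) :
    0 ≤ robinGreen α x y := by
  have hc := cA_pos hα
  have hcπ := cA_pi_lt_one hα
  have hπ := pi_pos
  obtain ⟨hx1, hx2⟩ := hx; obtain ⟨hy1, hy2⟩ := hy
  have ht : 2 * cA α * (1/(2 * cA α)) = 1 := by field_simp
  unfold robinGreen
  rcases le_total x y with h | h
  · rw [abs_of_nonpos (by linarith)]
    have h1 : 0 ≤ 1 - cA α * y := by nlinarith [mul_le_mul_of_nonneg_left hy2 hc.le]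
    have key : 0 ≤ 2 * cA α * (-(1/2) * cA α * x * y - 1/2 * -(x - y)) + 1 := by
      nlinarith [mul_nonneg (mul_nonneg hc.le h1) (by linarith : (0:ℝ) ≤ x + π),
        mul_nonneg (by linarith : (0:ℝ) ≤ 1 - cA α * π) h1]
    nlinarith [key, ht, hc]
  · rw [abs_of_nonneg (by linarith)]
    have h1 : 0 ≤ 1 - cA α * x := by nlinarith [mul_le_mul_of_nonneg_left hx2 hc.le]
    have key : 0 ≤ 2 * cA α * (-(1/2) * cA α * x * y - 1/2 * (x - y)) + 1 := by
      nlinarith [mul_nonneg (mul_nonneg hc.le h1) (by linarith : (0:ℝ) ≤ y + π),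
        mul_nonneg (by linarith : (0:ℝ) ≤ 1 - cA α * π) h1]
    nlinarith [key, ht, hc]

end kernel

lemma green_cont (α x : ℝ) : Continuous (fun y => robinGreen α x y) := by
  unfold robinGreen; fun_prop

lemma green_cont' (α c x : ℝ) : Continuous (fun y => robinGreen α x (c - y)) := by
  unfold robinGreen; fun_prop

section cont
variable {α : ℝ} {f : ℝ → ℝ}

lemma green_lip {x x' y : ℝ} (hy : |y| ≤ π) :
    |robinGreen α x y - robinGreen α x' y| ≤ ((|cA α| * π + 1)/2) * |x - x'| := by
  have e : robinGreen α x y - robinGreen α x' y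
      = -((1/2) * cA α * (x - x') * y + (1/2) * (|x - y| - |x' - y|)) := by
    unfold robinGreen; ring
  rw [e, abs_neg]
  have h1 : |(1/2) * (|x - y| - |x' - y|)| ≤ (1/2) * |x - x'| := by
    rw [abs_mul, abs_of_nonneg (by norm_num : (0:ℝ) ≤ 1/2)]
    have := abs_abs_sub_abs_le_abs_sub (x - y) (x' - y)
    rw [sub_sub_sub_cancel_right] at this
    linarith
  have h2 : |(1/2) * cA α * (x - x') * y| ≤ (1/2) * |cA α| * |x - x'| * π := by
    rw [abs_mul, abs_mul, abs_mul, abs_of_nonneg (by norm_num : (0:ℝ) ≤ 1/2)]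
    apply mul_le_mul_of_nonneg_left hy
    positivity
  calc |(1/2) * cA α * (x - x') * y + (1/2) * (|x - y| - |x' - y|)|
      ≤ |(1/2) * cA α * (x - x') * y| + |(1/2) * (|x - y| - |x' - y|)| := abs_add_le _ _
    _ ≤ (1/2) * |cA α| * |x - x'| * π + (1/2) * |x - x'| := add_le_add h2 h1
    _ = ((|cA α| * π + 1)/2) * |x - x'| := by ring

set_option maxHeartbeats 1000000 in
lemma robinSol_continuous (hfi : IntervalIntegrable f volume (-π) π) :
    Continuous (robinSol α f) := by
  have hππ : -π ≤ π := by linarith [pi_pos]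
  set M : ℝ := ∫ y in (-π)..π, |f y| with hM
  have hM0 : 0 ≤ M := intervalIntegral.integral_nonneg hππ (fun y _ => abs_nonneg _)
  set K : ℝ := ((|cA α| * π + 1)/2) * M with hK
  have hK0 : 0 ≤ K := by
    apply mul_nonneg _ hM0
    positivity
  apply LipschitzWith.continuous (K := Real.toNNReal K)
  apply LipschitzWith.of_dist_le_mul
  intro x x'
  rw [Real.coe_toNNReal _ hK0, Real.dist_eq, Real.dist_eq]
  have hii : ∀ z : ℝ, IntervalIntegrable (fun y => robinGreen α z y * f y) volume (-π) π :=
    fun z => hfi.continuousOn_mul (green_cont α z).continuousOn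
  have e1 : robinSol α f x - robinSol α f x'
      = ∫ y in (-π)..π, (robinGreen α x y - robinGreen α x' y) * f y := by
    rw [robinSol, robinSol, ← intervalIntegral.integral_sub (hii x) (hii x')]
    congr 1; funext y; ring
  rw [e1]
  have hiid : IntervalIntegrable (fun y => (robinGreen α x y - robinGreen α x' y) * f y)
      volume (-π) π := by simpa [sub_mul] using ((hii x).sub (hii x'))
  calc |∫ y in (-π)..π, (robinGreen α x y - robinGreen α x' y) * f y|
      ≤ ∫ y in (-π)..π, |(robinGreen α x y - robinGreen α x' y) * f y| :=
        intervalIntegral.abs_integral_le_integral_abs hππ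
    _ ≤ ∫ y in (-π)..π, ((|cA α| * π + 1)/2) * |x - x'| * |f y| := by
        apply intervalIntegral.integral_mono_on hππ hiid.abs
          ((hfi.abs.const_mul _))
        intro y hy
        rw [abs_mul]
        apply mul_le_mul_of_nonneg_right _ (abs_nonneg _)
        apply green_lip
        rw [abs_le]; exact ⟨hy.1, hy.2⟩
    _ = K * |x - x'| := by
        rw [intervalIntegral.integral_const_mul, hK, hM]; ring

lemma robinSol_nonneg (hα : 0 < α) (hf0 : ∀ y ∈ Icc (-π) π, 0 ≤ f y) {x : ℝ}
    (hx : x ∈ Icc (-π) π) : 0 ≤ robinSol α f x := by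
  apply intervalIntegral.integral_nonneg (by linarith [pi_pos])
  intro y hy
  exact mul_nonneg (green_nonneg hα hx hy) (hf0 y hy)
end cont

section mid
variable {α b : ℝ} {f : ℝ → ℝ}

lemma polar_lt (hb : 0 < b) {y : ℝ} (hy : y < 2*b - π) : polar b f y = f y := by
  rw [polar, if_pos hb, if_pos hy]

lemma polar_mid (hb : 0 < b) {y : ℝ} (hy1 : 2*b - π ≤ y) (hy2 : y ≤ b) :
    polar b f y = max (f y) (f (2*b - y)) := by
  rw [polar, if_pos hb, if_neg (not_lt.2 hy1), if_pos hy2]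

lemma polar_right (hb : 0 < b) (hbπ : b < π) {y : ℝ} (hy : b ≤ y) :
    polar b f y = min (f y) (f (2*b - y)) := by
  rcases eq_or_lt_of_le hy with h | h
  · rw [polar, if_pos hb, if_neg (not_lt.2 (by linarith)), if_pos (le_of_eq h.symm)]
    rw [show 2*b - y = y by linarith]
    simp
  · rw [polar, if_pos hb, if_neg (not_lt.2 (by linarith)), if_neg (not_le.2 h)]

lemma IntervalIntegrable.myMax {f g : ℝ → ℝ} {a b : ℝ} (hf : IntervalIntegrable f volume a b)
    (hg : IntervalIntegrable g volume a b) :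
    IntervalIntegrable (fun y => max (f y) (g y)) volume a b := by
  rw [intervalIntegrable_iff] at *
  exact hf.sup hg

lemma IntervalIntegrable.myMin {f g : ℝ → ℝ} {a b : ℝ} (hf : IntervalIntegrable f volume a b)
    (hg : IntervalIntegrable g volume a b) :
    IntervalIntegrable (fun y => min (f y) (g y)) volume a b := by
  rw [intervalIntegrable_iff] at *
  exact hf.inf hg

lemma split_integral {h : ℝ → ℝ} (hb : 0 < b) (hbπ : b < π)
    (h1 : IntervalIntegrable h volume (-π) (2*b - π))
    (h2 : IntervalIntegrable h volume (2*b - π) b)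
    (h3 : IntervalIntegrable h volume b π) :
    ∫ y in (-π)..π, h y
      = (∫ y in (-π)..(2*b - π), h y) + ∫ y in (2*b - π)..b, (h y + h (2*b - y)) := by
  have h2' : IntervalIntegrable (fun y => h (2*b - y)) volume (2*b - π) b := by
    have := (h3.comp_sub_left (2*b)).symm
    rw [show 2*b - b = b by ring, show 2*b - π = 2*b - π from rfl] at this
    exact this
  have e3 : (∫ y in (2*b - π)..b, h (2*b - y)) = ∫ y in b..π, h y := by
    have := intervalIntegral.integral_comp_sub_left (a := 2*b - π) (b := b) h (2*b)
    rw [show 2*b - b = b by ring, show 2*b - (2*b - π) = π by ring] at this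
    exact this
  have e4 := intervalIntegral.integral_add h2 h2'
  have e1 := intervalIntegral.integral_add_adjacent_intervals h2 h3
  have e2 := intervalIntegral.integral_add_adjacent_intervals h1 (h2.trans h3)
  rw [e4, e3]
  linarith [e1, e2]

end mid

section rep
variable {α b : ℝ} {f : ℝ → ℝ}

lemma hpipi : -π ≤ π := by linarith [pi_pos]

lemma II_sub (hfi : IntervalIntegrable f volume (-π) π) {c d : ℝ}
    (h1 : -π ≤ c) (h2 : c ≤ d) (h3 : d ≤ π) : IntervalIntegrable f volume c d := by
  apply hfi.mono_set
  rw [uIcc_of_le h2, uIcc_of_le hpipi]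
  exact Icc_subset_Icc h1 h3

lemma II_refl_gen {h : ℝ → ℝ} {b c d : ℝ} (hh : IntervalIntegrable h volume c d) :
    IntervalIntegrable (fun y => h (2*b - y)) volume (2*b - d) (2*b - c) := by
  exact (hh.comp_sub_left (2*b)).symm

lemma ae_ne_vol (c : ℝ) : ∀ᵐ y ∂(volume : Measure ℝ), y ≠ c := by
  have h : {y : ℝ | ¬ y ≠ c} = {c} := by ext y; simp
  rw [ae_iff, h]
  exact measure_singleton c

section withb
variable (hα : 0 < α) (hb : 0 < b) (hbπ : b < π)
  (hfi : IntervalIntegrable f volume (-π) π)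

include hb hbπ hfi

lemma II_refl : IntervalIntegrable (fun y => f (2*b - y)) volume (2*b - π) b := by
  have := II_refl_gen (b := b) (II_sub hfi (by linarith) (by linarith) le_rfl : IntervalIntegrable f volume b π)
  rwa [show 2*b - b = b by ring] at this

lemma II_refl' : IntervalIntegrable (fun y => f (2*b - y)) volume b π := by
  have := II_refl_gen (b := b)
    (II_sub hfi (by linarith) (by linarith) (by linarith) : IntervalIntegrable f volume (2*b - π) b)
  rwa [show 2*b - b = b by ring, show 2*b - (2*b - π) = π by ring] at this

/-- interval integrability of the unpolarized second-piece integrand -/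
lemma II_u2 (z : ℝ) : IntervalIntegrable
    (fun y => robinGreen α z y * f y + robinGreen α z (2*b - y) * f (2*b - y))
    volume (2*b - π) b := by
  apply IntervalIntegrable.add
  · exact (II_sub hfi (by linarith) (by linarith) (by linarith)).continuousOn_mul (green_cont α z).continuousOn
  · have base : IntervalIntegrable (fun t => robinGreen α z t * f t) volume b π :=
      (II_sub hfi (by linarith) (by linarith) le_rfl).continuousOn_mul (green_cont α z).continuousOn
    have := II_refl_gen (b := b) base
    rwa [show 2*b - b = b by ring, show 2*b - π = 2*b - π from rfl] at this

/-- interval integrability of the polarized second-piece integrand -/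
lemma II_v2 (z : ℝ) : IntervalIntegrable
    (fun y => robinGreen α z y * max (f y) (f (2*b - y))
      + robinGreen α z (2*b - y) * min (f (2*b - y)) (f y))
    volume (2*b - π) b := by
  apply IntervalIntegrable.add
  · exact ((II_sub hfi (by linarith) (by linarith) (by linarith)).myMax (II_refl hb hbπ hfi)).continuousOn_mul
      (green_cont α z).continuousOn
  · have base : IntervalIntegrable (fun t => robinGreen α z t * min (f t) (f (2*b - t)))
        volume b π :=
      ((II_sub hfi (by linarith) (by linarith) le_rfl).myMin (II_refl' hb hbπ hfi)).continuousOn_mul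
        (green_cont α z).continuousOn
    have h2 := II_refl_gen (b := b) base
    rw [show 2*b - b = b by ring] at h2
    apply h2.congr
    intro y _
    simp only [show 2*b - (2*b - y) = y by ring]

include hα in
lemma sol_repr (x : ℝ) :
    robinSol α f x = (∫ y in (-π)..(2*b - π), robinGreen α x y * f y)
      + ∫ y in (2*b - π)..b,
          (robinGreen α x y * f y + robinGreen α x (2*b - y) * f (2*b - y)) := by
  exact split_integral (h := fun y => robinGreen α x y * f y) hb hbπ
    ((II_sub hfi le_rfl (by linarith) (by linarith)).continuousOn_mul (green_cont α x).continuousOn)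
    ((II_sub hfi (by linarith) (by linarith) (by linarith)).continuousOn_mul (green_cont α x).continuousOn)
    ((II_sub hfi (by linarith) (by linarith) le_rfl).continuousOn_mul (green_cont α x).continuousOn)

include hα in
lemma sol_repr_polar (x : ℝ) :
    robinSol α (polar b f) x = (∫ y in (-π)..(2*b - π), robinGreen α x y * f y)
      + ∫ y in (2*b - π)..b,
          (robinGreen α x y * max (f y) (f (2*b - y))
            + robinGreen α x (2*b - y) * min (f (2*b - y)) (f y)) := by
  have q1 : IntervalIntegrable (fun y => robinGreen α x y * polar b f y) volume (-π) (2*b-π) := by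
    apply IntervalIntegrable.congr_ae
      ((II_sub hfi le_rfl (by linarith) (by linarith)).continuousOn_mul (green_cont α x).continuousOn)
    filter_upwards [ae_restrict_mem measurableSet_uIoc,
      ae_restrict_of_ae (ae_ne_vol (2*b - π))] with y hmem hne
    rw [uIoc_of_le (by linarith : -π ≤ 2*b - π)] at hmem
    rw [polar_lt hb (lt_of_le_of_ne hmem.2 hne)]
  have q2 : IntervalIntegrable (fun y => robinGreen α x y * polar b f y) volume (2*b-π) b := by
    apply IntervalIntegrable.congr_ae
      (((II_sub hfi (by linarith) (by linarith) (by linarith)).myMax (II_refl hb hbπ hfi)).continuousOn_mul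
        (green_cont α x).continuousOn)
    filter_upwards [ae_restrict_mem measurableSet_uIoc] with y hmem
    rw [uIoc_of_le (by linarith : 2*b - π ≤ b)] at hmem
    rw [polar_mid hb hmem.1.le hmem.2]
  have q3 : IntervalIntegrable (fun y => robinGreen α x y * polar b f y) volume b π := by
    apply IntervalIntegrable.congr_ae
      (((II_sub hfi (by linarith) (by linarith) le_rfl).myMin (II_refl' hb hbπ hfi)).continuousOn_mul
        (green_cont α x).continuousOn)
    filter_upwards [ae_restrict_mem measurableSet_uIoc] with y hmem
    rw [uIoc_of_le (by linarith : b ≤ π)] at hmem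
    rw [polar_right hb hbπ hmem.1.le]
  have e := split_integral (h := fun y => robinGreen α x y * polar b f y) hb hbπ q1 q2 q3
  rw [robinSol, e]
  congr 1
  · apply intervalIntegral.integral_congr_ae
    filter_upwards [ae_ne_vol (2*b - π)] with y hne hmem
    rw [uIoc_of_le (by linarith : -π ≤ 2*b - π)] at hmem
    beta_reduce
    rw [polar_lt hb (lt_of_le_of_ne hmem.2 hne)]
  · apply intervalIntegral.integral_congr
    intro y hy
    rw [uIcc_of_le (by linarith : 2*b - π ≤ b)] at hy
    beta_reduce
    rw [polar_mid hb hy.1 hy.2, polar_right hb hbπ (by linarith [hy.2] : b ≤ 2*b - y),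
      show 2*b - (2*b - y) = y by ring]

end withb
end rep

section Scomp
variable {α b : ℝ} {f : ℝ → ℝ}
variable (hα : 0 < α) (hb : 0 < b) (hbπ : b < π)
  (hfi : IntervalIntegrable f volume (-π) π)
  (hf0 : ∀ y ∈ Icc (-π) π, 0 ≤ f y)

include hα hb hbπ hfi hf0

lemma S1 {x : ℝ} (hx : x ∈ Icc (-π) b) :
    robinSol α f x ≤ robinSol α (polar b f) x := by
  rw [sol_repr hα hb hbπ hfi x, sol_repr_polar hα hb hbπ hfi x]
  apply add_le_add le_rfl
  apply intervalIntegral.integral_mono_on (by linarith) (II_u2 hb hbπ hfi x) (II_v2 hb hbπ hfi x)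
  intro y hy
  have hK1 : robinGreen α x (2*b - y) ≤ robinGreen α x y :=
    green_K1 hα hb hbπ hx.1 hx.2 hy.1 hy.2
  rcases le_total (f (2*b - y)) (f y) with h | h
  · rw [max_eq_left h, min_eq_left h]
  · rw [max_eq_right h, min_eq_right h]
    nlinarith [mul_nonneg (sub_nonneg.2 hK1) (sub_nonneg.2 h)]

lemma S2 {x : ℝ} (hx : x ∈ Icc (2*b - π) b) :
    robinSol α f (2*b - x) ≤ robinSol α (polar b f) x := by
  rw [sol_repr hα hb hbπ hfi (2*b - x), sol_repr_polar hα hb hbπ hfi x]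
  apply add_le_add
  · apply intervalIntegral.integral_mono_on (by linarith)
      ((II_sub hfi le_rfl (by linarith) (by linarith)).continuousOn_mul
        (green_cont α (2*b - x)).continuousOn)
      ((II_sub hfi le_rfl (by linarith) (by linarith)).continuousOn_mul
        (green_cont α x).continuousOn)
    intro y hy
    apply mul_le_mul_of_nonneg_right _ (hf0 y ⟨hy.1, by linarith [hy.2]⟩)
    rw [green_symm α (2*b - x) y, green_symm α x y]
    exact green_K1 hα hb hbπ hy.1 (by linarith [hy.2]) hx.1 hx.2
  · apply intervalIntegral.integral_mono_on (by linarith)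
      (II_u2 hb hbπ hfi (2*b - x)) (II_v2 hb hbπ hfi x)
    intro y hy
    have hAB : robinGreen α (2*b - x) y ≤ robinGreen α x y := by
      rw [green_symm α (2*b - x) y, green_symm α x y]
      exact green_K1 hα hb hbπ (by linarith [hy.1]) hy.2 hx.1 hx.2
    have hAB' : robinGreen α (2*b - x) (2*b - y) ≤ robinGreen α x y :=
      green_K3 hα hb hx.2 hy.2
    have hsum : robinGreen α (2*b - x) y + robinGreen α (2*b - x) (2*b - y) ≤
        robinGreen α x y + robinGreen α x (2*b - y) := green_K4 hα hb hx.2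
    have hp0 : 0 ≤ f y := hf0 y ⟨by linarith [hy.1], by linarith [hy.2]⟩
    have hq0 : 0 ≤ f (2*b - y) := hf0 (2*b - y) ⟨by linarith [hy.2], by linarith [hy.1]⟩
    rcases le_total (f (2*b - y)) (f y) with h | h
    · rw [max_eq_left h, min_eq_left h]
      nlinarith [mul_nonneg (sub_nonneg.2 hAB) (sub_nonneg.2 h),
        mul_nonneg hq0 (sub_nonneg.2 hsum)]
    · rw [max_eq_right h, min_eq_right h]
      nlinarith [mul_nonneg (sub_nonneg.2 hAB') (sub_nonneg.2 h),
        mul_nonneg hp0 (sub_nonneg.2 hsum)]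

lemma S3 {x : ℝ} (hx : x ∈ Icc (2*b - π) b) :
    robinSol α f x + robinSol α f (2*b - x)
      ≤ robinSol α (polar b f) x + robinSol α (polar b f) (2*b - x) := by
  rw [sol_repr hα hb hbπ hfi x, sol_repr hα hb hbπ hfi (2*b - x),
    sol_repr_polar hα hb hbπ hfi x, sol_repr_polar hα hb hbπ hfi (2*b - x)]
  have key : (∫ y in (2*b - π)..b,
        (robinGreen α x y * f y + robinGreen α x (2*b - y) * f (2*b - y)))
      + (∫ y in (2*b - π)..b,
        (robinGreen α (2*b - x) y * f y + robinGreen α (2*b - x) (2*b - y) * f (2*b - y)))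
      ≤ (∫ y in (2*b - π)..b,
        (robinGreen α x y * max (f y) (f (2*b - y))
          + robinGreen α x (2*b - y) * min (f (2*b - y)) (f y)))
      + ∫ y in (2*b - π)..b,
        (robinGreen α (2*b - x) y * max (f y) (f (2*b - y))
          + robinGreen α (2*b - x) (2*b - y) * min (f (2*b - y)) (f y)) := by
    rw [← intervalIntegral.integral_add (II_u2 hb hbπ hfi x) (II_u2 hb hbπ hfi (2*b - x)),
      ← intervalIntegral.integral_add (II_v2 hb hbπ hfi x) (II_v2 hb hbπ hfi (2*b - x))]
    apply intervalIntegral.integral_mono_on (by linarith)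
      ((II_u2 hb hbπ hfi x).add (II_u2 hb hbπ hfi (2*b - x)))
      ((II_v2 hb hbπ hfi x).add (II_v2 hb hbπ hfi (2*b - x)))
    intro y hy
    have hco : robinGreen α x (2*b - y) + robinGreen α (2*b - x) (2*b - y)
        ≤ robinGreen α x y + robinGreen α (2*b - x) y := by
      have := green_K4 (x := y) (y := x) hα hb hy.2
      rw [green_symm α (2*b - y) x, green_symm α (2*b - y) (2*b - x),
        green_symm α y x, green_symm α y (2*b - x)] at this
      linarith
    rcases le_total (f (2*b - y)) (f y) with h | h
    · rw [max_eq_left h, min_eq_left h]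
    · rw [max_eq_right h, min_eq_right h]
      nlinarith [mul_nonneg (sub_nonneg.2 hco) (sub_nonneg.2 h)]
  linarith [key]

end Scomp

lemma rpow_cont {r : ℝ} (hr : 0 ≤ r) : Continuous (fun z : ℝ => z ^ r) := by
  rw [continuous_iff_continuousAt]
  exact fun z => Real.continuousAt_rpow_const z r (Or.inr hr)

lemma spread_rpow {r A B t : ℝ} (hr : 1 ≤ r) (hB : 0 ≤ B) (hBA : B ≤ A)
    (ht0 : 0 ≤ t) (htB : t ≤ B) :
    A ^ r + B ^ r ≤ (A + t) ^ r + (B - t) ^ r := by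
  have hr0 : 0 ≤ r := by linarith
  set φ : ℝ → ℝ := fun t => (A + t) ^ r + (B - t) ^ r with hφ
  have hder : ∀ u ∈ Set.Ioo 0 B, HasDerivAt φ
      (r * (A + u) ^ (r - 1) - r * (B - u) ^ (r - 1)) u := by
    intro u hu
    have h1 : HasDerivAt (fun t : ℝ => (A + t) ^ r) (r * (A + u) ^ (r - 1)) u := by
      have base : HasDerivAt (fun z : ℝ => z ^ r) (r * (A + u) ^ (r - 1)) (A + u) :=
        Real.hasDerivAt_rpow_const (Or.inr hr)
      simpa [Function.comp_def] using base.comp u ((hasDerivAt_id u).const_add A)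
    have h2 : HasDerivAt (fun t : ℝ => (B - t) ^ r) (-(r * (B - u) ^ (r - 1))) u := by
      have base : HasDerivAt (fun z : ℝ => z ^ r) (r * (B - u) ^ (r - 1)) (B - u) :=
        Real.hasDerivAt_rpow_const (Or.inr hr)
      have inner : HasDerivAt (fun t : ℝ => B - t) (-1) u := by
        simpa using ((hasDerivAt_id u).const_sub B)
      simpa [mul_comm, Function.comp_def] using base.comp u inner
    simpa [sub_eq_add_neg, hφ, Pi.add_def] using h1.add h2
  have hmono : MonotoneOn φ (Set.Icc 0 B) := by
    apply monotoneOn_of_deriv_nonneg (convex_Icc 0 B)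
    · apply Continuous.continuousOn
      exact ((rpow_cont hr0).comp (continuous_const.add continuous_id)).add
        ((rpow_cont hr0).comp (continuous_const.sub continuous_id))
    · intro u hu
      rw [interior_Icc] at hu
      exact (hder u hu).differentiableAt.differentiableWithinAt
    · intro u hu
      rw [interior_Icc] at hu
      rw [(hder u hu).deriv]
      have : (B - u) ^ (r - 1) ≤ (A + u) ^ (r - 1) :=
        Real.rpow_le_rpow (by linarith [hu.2]) (by linarith [hu.1]) (by linarith)
      nlinarith
  have := hmono (Set.mem_Icc.2 ⟨le_rfl, hB⟩) (Set.mem_Icc.2 ⟨ht0, htB⟩) ht0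
  simpa [hφ] using this

lemma conv_rpow {r A B V W : ℝ} (hr : 1 ≤ r) (hA : 0 ≤ A) (hB : 0 ≤ B) (hW : 0 ≤ W)
    (hAV : A ≤ V) (hBV : B ≤ V) (hsum : A + B ≤ V + W) :
    A ^ r + B ^ r ≤ V ^ r + W ^ r := by
  have main : ∀ A B : ℝ, 0 ≤ A → 0 ≤ B → B ≤ A → A ≤ V → B ≤ V → A + B ≤ V + W →
      A ^ r + B ^ r ≤ V ^ r + W ^ r := by
    intro A B hA hB hBA hAV hBV hsum
    rcases le_total B (V - A) with hc | hc
    · -- V ≥ A + B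
      have h1 : A ^ r + B ^ r ≤ (A + B) ^ r + (B - B) ^ r := spread_rpow hr hB hBA hB le_rfl
      have h2 : (A + B) ^ r ≤ V ^ r := Real.rpow_le_rpow (by linarith) (by linarith) (by linarith)
      have h3 : 0 ≤ W ^ r := Real.rpow_nonneg hW r
      have h4 : (B - B : ℝ) ^ r = 0 := by
        rw [sub_self, Real.zero_rpow (by linarith : r ≠ 0)]
      linarith
    · -- take t = V - A
      have h1 : A ^ r + B ^ r ≤ (A + (V - A)) ^ r + (B - (V - A)) ^ r :=
        spread_rpow hr hB hBA (by linarith) hc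
      have h2 : (B - (V - A)) ^ r ≤ W ^ r :=
        Real.rpow_le_rpow (by linarith) (by linarith) (by linarith)
      have : (A + (V - A)) = V := by ring
      rw [this] at h1
      linarith
  rcases le_total B A with h | h
  · exact main A B hA hB h hAV hBV hsum
  · have := main B A hB hA h hBV hAV (by linarith)
    linarith

section assemble
open intervalIntegral

lemma II_of_integrableOn {f : ℝ → ℝ} (hf : IntegrableOn f (Icc (-π) π)) :
    IntervalIntegrable f volume (-π) π := by
  rw [intervalIntegrable_iff, uIoc_of_le hpipi]
  exact hf.mono_set Ioc_subset_Icc_self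

lemma polar_nonneg {b : ℝ} {f : ℝ → ℝ} (hb : 0 < b) (hbπ : b < π)
    (hf0 : ∀ y ∈ Icc (-π) π, 0 ≤ f y) :
    ∀ y ∈ Icc (-π) π, 0 ≤ polar b f y := by
  intro y hy
  rcases lt_or_ge y (2*b - π) with h | h
  · rw [polar_lt hb h]; exact hf0 y hy
  · rcases le_total y b with h2 | h2
    · rw [polar_mid hb h h2]
      exact le_trans (hf0 y hy) (le_max_left _ _)
    · rw [polar_right hb hbπ h2]
      exact le_min (hf0 y hy) (hf0 (2*b - y) ⟨by linarith [hy.2], by linarith [hy.1]⟩)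

lemma polar_II {b : ℝ} {f : ℝ → ℝ} (hb : 0 < b) (hbπ : b < π)
    (hfi : IntervalIntegrable f volume (-π) π) :
    IntervalIntegrable (polar b f) volume (-π) π := by
  have q1 : IntervalIntegrable (polar b f) volume (-π) (2*b - π) := by
    apply IntervalIntegrable.congr_ae (II_sub hfi le_rfl (by linarith) (by linarith))
    filter_upwards [ae_restrict_mem measurableSet_uIoc,
      ae_restrict_of_ae (ae_ne_vol (2*b - π))] with y hmem hne
    rw [uIoc_of_le (by linarith : -π ≤ 2*b - π)] at hmem
    rw [polar_lt hb (lt_of_le_of_ne hmem.2 hne)]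
  have q2 : IntervalIntegrable (polar b f) volume (2*b - π) b := by
    apply IntervalIntegrable.congr_ae
      ((II_sub hfi (by linarith) (by linarith) (by linarith)).myMax (II_refl hb hbπ hfi))
    filter_upwards [ae_restrict_mem measurableSet_uIoc] with y hmem
    rw [uIoc_of_le (by linarith : 2*b - π ≤ b)] at hmem
    rw [polar_mid hb hmem.1.le hmem.2]
  have q3 : IntervalIntegrable (polar b f) volume b π := by
    apply IntervalIntegrable.congr_ae
      ((II_sub hfi (by linarith) (by linarith) le_rfl).myMin (II_refl' hb hbπ hfi))
    filter_upwards [ae_restrict_mem measurableSet_uIoc] with y hmem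
    rw [uIoc_of_le (by linarith : b ≤ π)] at hmem
    rw [polar_right hb hbπ hmem.1.le]
  exact (q1.trans q2).trans q3

/-- The main inequality, in the case `0 < b < π`. -/
lemma main_pos (α : ℝ) (hα : 0 < α) (f : ℝ → ℝ)
    (hfi : IntervalIntegrable f volume (-π) π)
    (hf0 : ∀ x ∈ Icc (-π) π, 0 ≤ f x)
    (b : ℝ) (hb : 0 < b) (hbπ : b < π)
    (p : ℝ≥0∞) (hp : 1 ≤ p) :
    eLpNorm (robinSol α f) p (volume.restrict (Icc (-π) π)) ≤
      eLpNorm (robinSol α (polar b f)) p (volume.restrict (Icc (-π) π)) := by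
  have hπ := pi_pos
  set μ := volume.restrict (Icc (-π) π) with hμ
  set u := robinSol α f with hu
  set v := robinSol α (polar b f) with hv
  have hgi : IntervalIntegrable (polar b f) volume (-π) π := polar_II hb hbπ hfi
  have hucont : Continuous u := robinSol_continuous hfi
  have hvcont : Continuous v := robinSol_continuous hgi
  have hu0 : ∀ x ∈ Icc (-π) π, 0 ≤ u x := fun x hx => robinSol_nonneg hα hf0 hx
  have hv0 : ∀ x ∈ Icc (-π) π, 0 ≤ v x :=
    fun x hx => robinSol_nonneg hα (polar_nonneg hb hbπ hf0) hx
  have hS1 : ∀ x ∈ Icc (-π) b, u x ≤ v x := fun x hx => S1 hα hb hbπ hfi hf0 hx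
  have hS2 : ∀ x ∈ Icc (2*b - π) b, u (2*b - x) ≤ v x := fun x hx => S2 hα hb hbπ hfi hf0 hx
  have hS3 : ∀ x ∈ Icc (2*b - π) b, u x + u (2*b - x) ≤ v x + v (2*b - x) :=
    fun x hx => S3 hα hb hbπ hfi hf0 hx
  rcases eq_or_ne p ⊤ with hptop | hptop
  · -- `p = ∞`
    subst hptop
    rw [eLpNorm_exponent_top, eLpNorm_exponent_top, eLpNormEssSup, eLpNormEssSup]
    set E := essSup (fun x => (‖v x‖₊ : ℝ≥0∞)) μ with hE
    have hvE : ∀ᵐ x ∂μ, (‖v x‖₊ : ℝ≥0∞) ≤ E := ae_le_essSup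
    set N : Set ℝ := {x | ¬ ((‖v x‖₊ : ℝ≥0∞) ≤ E)} with hN
    have hNμ : μ N = 0 := ae_iff.1 hvE
    have hNvol : volume (N ∩ Icc (-π) π) = 0 := by
      rwa [hμ, Measure.restrict_apply' measurableSet_Icc] at hNμ
    have hσN : volume ((fun x : ℝ => 2*b - x) ⁻¹' (N ∩ Icc (-π) π)) = 0 :=
      (Measure.measurePreserving_sub_left volume (2*b)).quasiMeasurePreserving.preimage_null
        hNvol
    have hσNμ : μ ((fun x : ℝ => 2*b - x) ⁻¹' (N ∩ Icc (-π) π)) = 0 := by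
      apply le_antisymm _ zero_le
      calc μ _ ≤ volume ((fun x : ℝ => 2*b - x) ⁻¹' (N ∩ Icc (-π) π)) :=
            Measure.le_iff'.1 Measure.restrict_le_self _
        _ = 0 := hσN
    have claim : ∀ᵐ x ∂μ, (‖u x‖₊ : ℝ≥0∞) ≤ E := by
      have h3 : ∀ᵐ x ∂μ, x ∉ ((fun x : ℝ => 2*b - x) ⁻¹' (N ∩ Icc (-π) π)) := by
        rw [ae_iff]
        refine measure_mono_null (fun x hx => ?_) hσNμ
        simpa using hx
      filter_upwards [ae_restrict_mem measurableSet_Icc, hvE, h3] with x hxIcc hxv hxσ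
      have convert_le : ∀ t, 0 ≤ u x → u x ≤ v t → (‖v t‖₊ : ℝ≥0∞) ≤ E →
          (‖u x‖₊ : ℝ≥0∞) ≤ E := by
        intro t h0 hle hvt
        have e1 : (‖u x‖₊ : ℝ≥0∞) = ENNReal.ofReal (u x) := by
          rw [← enorm_eq_nnnorm, ← ofReal_norm, Real.norm_eq_abs, abs_of_nonneg h0]
        have e2 : ENNReal.ofReal (v t) ≤ (‖v t‖₊ : ℝ≥0∞) := by
          rw [← enorm_eq_nnnorm, ← ofReal_norm, Real.norm_eq_abs]
          exact ENNReal.ofReal_le_ofReal (le_abs_self _)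
        rw [e1]
        exact le_trans (le_trans (ENNReal.ofReal_le_ofReal hle) e2) hvt
      rcases le_total x b with hxb | hxb
      · exact convert_le x (hu0 x hxIcc) (hS1 x ⟨hxIcc.1, hxb⟩) hxv
      · have hmem : (2*b - x) ∈ Icc (2*b - π) b := ⟨by linarith [hxIcc.2], by linarith⟩
        have hIcc : (2*b - x) ∈ Icc (-π) π := ⟨by linarith [hxIcc.2], by linarith⟩
        have hvN : (2*b - x) ∉ N := fun hmemN => hxσ (by exact ⟨hmemN, hIcc⟩)
        have hvt : (‖v (2*b - x)‖₊ : ℝ≥0∞) ≤ E := not_not.1 hvN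
        have : u x ≤ v (2*b - x) := by
          have := hS2 (2*b - x) hmem
          rwa [show 2*b - (2*b - x) = x by ring] at this
        exact convert_le (2*b - x) (hu0 x hxIcc) this hvt
    exact essSup_le_of_ae_le E claim
  · -- `p < ∞`
    have hp0 : p ≠ 0 := (lt_of_lt_of_le zero_lt_one hp).ne'
    set r := p.toReal with hr
    have hr1 : 1 ≤ r := by
      rw [hr, ← ENNReal.toReal_one]
      exact ENNReal.toReal_mono hptop hp
    have hr0 : 0 < r := by linarith
    rw [eLpNorm_eq_lintegral_rpow_enorm_toReal hp0 hptop, eLpNorm_eq_lintegral_rpow_enorm_toReal hp0 hptop]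
    simp only [enorm_eq_nnnorm]
    apply ENNReal.rpow_le_rpow _ (by positivity)
    have convert_lint : ∀ (w : ℝ → ℝ), Continuous w → (∀ x ∈ Icc (-π) π, 0 ≤ w x) →
        (∫⁻ x, (‖w x‖₊ : ℝ≥0∞) ^ r ∂μ) = ENNReal.ofReal (∫ x in Icc (-π) π, w x ^ r) := by
      intro w hw hw0
      have step1 : (∫⁻ x, (‖w x‖₊ : ℝ≥0∞) ^ r ∂μ)
          = ∫⁻ x, ENNReal.ofReal (w x ^ r) ∂μ := by
        apply lintegral_congr_ae
        filter_upwards [ae_restrict_mem measurableSet_Icc] with x hx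
        rw [← enorm_eq_nnnorm, ← ofReal_norm, Real.norm_eq_abs, abs_of_nonneg (hw0 x hx),
          ENNReal.ofReal_rpow_of_nonneg (hw0 x hx) hr0.le]
      have hInt : Integrable (fun x => w x ^ r) μ := by
        apply ContinuousOn.integrableOn_compact isCompact_Icc
        exact ((rpow_cont hr0.le).comp hw).continuousOn
      have hnn : 0 ≤ᵐ[μ] fun x => w x ^ r := by
        filter_upwards [ae_restrict_mem measurableSet_Icc] with x hx
        exact Real.rpow_nonneg (hw0 x hx) r
      rw [step1, ← ofReal_integral_eq_lintegral_ofReal hInt hnn]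
    rw [convert_lint u hucont hu0, convert_lint v hvcont hv0]
    apply ENNReal.ofReal_le_ofReal
    rw [MeasureTheory.integral_Icc_eq_integral_Ioc, MeasureTheory.integral_Icc_eq_integral_Ioc,
      ← intervalIntegral.integral_of_le hpipi, ← intervalIntegral.integral_of_le hpipi]
    have IIur : ∀ (w : ℝ → ℝ), Continuous w → ∀ c d : ℝ,
        IntervalIntegrable (fun x => w x ^ r) volume c d :=
      fun w hw c d => (((rpow_cont hr0.le).comp hw)).intervalIntegrable c d
    rw [split_integral (h := fun x => u x ^ r) hb hbπ (IIur u hucont _ _) (IIur u hucont _ _)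
        (IIur u hucont _ _),
      split_integral (h := fun x => v x ^ r) hb hbπ (IIur v hvcont _ _) (IIur v hvcont _ _)
        (IIur v hvcont _ _)]
    apply add_le_add
    · apply intervalIntegral.integral_mono_on (by linarith) (IIur u hucont _ _)
        (IIur v hvcont _ _)
      intro x hx
      exact Real.rpow_le_rpow (hu0 x ⟨hx.1, by linarith [hx.2]⟩)
        (hS1 x ⟨hx.1, by linarith [hx.2]⟩) hr0.le
    · apply intervalIntegral.integral_mono_on (by linarith)
        ((IIur u hucont _ _).add ?_) ((IIur v hvcont _ _).add ?_)
      · intro x hx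
        have hxI : x ∈ Icc (-π) π := ⟨by linarith [hx.1], by linarith [hx.2]⟩
        have hxI' : (2*b - x) ∈ Icc (-π) π := ⟨by linarith [hx.2], by linarith [hx.1]⟩
        exact conv_rpow hr1 (hu0 x hxI) (hu0 _ hxI') (hv0 _ hxI')
          (hS1 x ⟨hxI.1, hx.2⟩) (hS2 x hx) (hS3 x hx)
      · have := ((IIur u hucont b π).comp_sub_left (2*b)).symm
        rwa [show 2*b - b = b by ring, show 2*b - π = 2*b - π from rfl] at this
      · have := ((IIur v hvcont b π).comp_sub_left (2*b)).symm
        rwa [show 2*b - b = b by ring, show 2*b - π = 2*b - π from rfl] at this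

end assemble

section reflect

lemma green_even (α x y : ℝ) : robinGreen α (-x) (-y) = robinGreen α x y := by
  unfold robinGreen
  rw [show -x - -y = -(x - y) by ring, abs_neg]; ring

lemma robinSol_comp_neg (α : ℝ) (h : ℝ → ℝ) (x : ℝ) :
    robinSol α (fun t => h (-t)) (-x) = robinSol α h x := by
  rw [robinSol, robinSol]
  calc (∫ y in (-π)..π, robinGreen α (-x) y * (fun t => h (-t)) y)
      = ∫ y in (-π)..π, (fun t => robinGreen α (-x) (-t) * h t) (-y) := by
        apply intervalIntegral.integral_congr; intro y _; simp [neg_neg]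
    _ = ∫ y in (-π)..π, robinGreen α (-x) (-y) * h y := by
        have := intervalIntegral.integral_comp_neg (a := -π) (b := π)
          (fun t => robinGreen α (-x) (-t) * h t)
        rw [neg_neg] at this
        exact this
    _ = ∫ y in (-π)..π, robinGreen α x y * h y := by
        apply intervalIntegral.integral_congr; intro y _
        show robinGreen α (-x) (-y) * h y = robinGreen α x y * h y
        rw [green_even]

lemma polar_neg_eq {b : ℝ} {f : ℝ → ℝ} (hbl : -π < b) (hb0 : b < 0) (x : ℝ) :
    polar b f x = polar (-b) (fun t => f (-t)) (-x) := by
  have hπ := pi_pos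
  rw [polar, polar, if_neg (not_lt.2 hb0.le), if_pos (by linarith : (0:ℝ) < -b)]
  by_cases h1 : x ≤ b
  · rw [if_neg (by push_neg; linarith : ¬ (-x < 2 * -b - π))]
    rcases eq_or_lt_of_le h1 with he | hlt
    · rw [if_pos h1, if_pos (by linarith : -x ≤ -b)]
      simp only [neg_neg]
      rw [show (2*b - x) = x by rw [← he]; ring, show (2 * -b - -x) = -x by rw [← he]; ring]
      simp only [neg_neg]
      rw [min_self, max_self]
    · rw [if_pos h1, if_neg (by push_neg; linarith : ¬ (-x ≤ -b))]
      simp only [neg_neg]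
      rw [show (-(2 * -b - -x)) = 2*b - x by ring]
  · rw [if_neg h1]
    by_cases h2 : x ≤ 2*b + π
    · rw [if_pos h2, if_neg (by push_neg; linarith : ¬ (-x < 2 * -b - π)),
        if_pos (by linarith : -x ≤ -b)]
      simp only [neg_neg]
      rw [show (-(2 * -b - -x)) = 2*b - x by ring]
    · rw [if_neg h2, if_pos (by linarith : -x < 2 * -b - π)]
      simp only [neg_neg]

end reflect

/-- **Polarization and `L^p` norms.** -/
theorem polarization_Lp_norms
    (α : ℝ) (hα : 0 < α)
    (f : ℝ → ℝ) (hf : IntegrableOn f (Icc (-π) π))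
    (hf0 : ∀ x ∈ Icc (-π) π, 0 ≤ f x)
    (b : ℝ) (hb : b ∈ Ioo (-π) 0 ∪ Ioo 0 π)
    (p : ℝ≥0∞) (hp : 1 ≤ p) :
    eLpNorm (robinSol α f) p (volume.restrict (Icc (-π) π)) ≤
      eLpNorm (robinSol α (polar b f)) p (volume.restrict (Icc (-π) π)) := by
  have hπ := pi_pos
  have hfi : IntervalIntegrable f volume (-π) π := II_of_integrableOn hf
  rcases hb with hbneg | hbpos
  · obtain ⟨hbl, hb0⟩ := hbneg
    set f' : ℝ → ℝ := fun t => f (-t) with hf'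
    have hfi' : IntervalIntegrable f' volume (-π) π := by
      have h2 := (hfi.comp_sub_left 0).symm
      simp only [zero_sub, neg_neg] at h2
      exact h2
    have hf0' : ∀ x ∈ Icc (-π) π, 0 ≤ f' x := by
      intro x hx; exact hf0 (-x) ⟨by linarith [hx.2], by linarith [hx.1]⟩
    have hmain := main_pos α hα f' hfi' hf0' (-b) (by linarith) (by linarith) p hp
    have hmp : MeasurePreserving (fun x : ℝ => -x) (volume.restrict (Icc (-π) π))
        (volume.restrict (Icc (-π) π)) := by
      have h0 := (Measure.measurePreserving_neg (volume : Measure ℝ)).restrict_preimage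
        (s := Icc (-π) π) measurableSet_Icc
      have hpre : (Neg.neg ⁻¹' (Icc (-π) π) : Set ℝ) = Icc (-π) π := by
        ext z; simp only [Set.mem_preimage, Set.mem_Icc]
        constructor <;> intro hz <;> exact ⟨by linarith [hz.2], by linarith [hz.1]⟩
      rwa [hpre] at h0
    have e1 : robinSol α f = (robinSol α f') ∘ (fun x : ℝ => -x) := by
      funext x
      exact (robinSol_comp_neg α f x).symm
    have e2 : robinSol α (polar b f) = (robinSol α (polar (-b) f')) ∘ (fun x : ℝ => -x) := by
      funext x
      have h3 : polar b f = fun t => (polar (-b) f') (-t) := by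
        funext t; exact polar_neg_eq hbl hb0 t
      rw [h3]
      have h4 := robinSol_comp_neg α (polar (-b) f') (-x)
      rw [neg_neg] at h4
      exact h4
    rw [e1, e2,
      eLpNorm_comp_measurePreserving (robinSol_continuous hfi').aestronglyMeasurable hmp,
      eLpNorm_comp_measurePreserving
        (robinSol_continuous (polar_II (by linarith) (by linarith) hfi')).aestronglyMeasurable
        hmp]
    exact hmain
  · exact main_pos α hα f hfi hf0 b hbpos.1 hbpos.2 p hp
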